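/- For the simple symmetric random walk on ℤ started at 0, if T is the first hitting time of 2, then for every n ∈ ℕ one has P(T > 2n) = 4^{−n} · C(2n+1, n), where C(2n+1,n) is the binomial coefficient. (Theorem 5.2, identity (5.2)–(5.3).) -/

import Mathlib

namespace RWAux

def val (x : Bool) : ℤ := if x then 1 else -1

def psum {m : ℕ} (ε : Fin m → Bool) (k : ℕ) : ℤ :=
  ∑ i ∈ Finset.range k, (if h : i < m then val (ε ⟨i, h⟩) else 0)

@[simp] lemma psum_zero {m : ℕ} (ε : Fin m → Bool) : psum ε 0 = 0 := by
  simp [psum]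

lemma psum_cons_succ {m : ℕ} (x : Bool) (ε : Fin m → Bool) (k : ℕ) :
    psum (Fin.cons x ε) (k + 1) = val x + psum ε k := by
  unfold psum
  rw [Finset.sum_range_succ']
  have h0 : (if h : (0:ℕ) < m + 1 then val ((Fin.cons x ε : Fin (m+1) → Bool) ⟨0, h⟩) else 0) = val x := by
    simp
  rw [h0, add_comm]
  congr 1
  refine Finset.sum_congr rfl fun i _ => ?_
  by_cases h : i < m
  · rw [dif_pos (Nat.succ_lt_succ h), dif_pos h]
    congr 1
  · rw [dif_neg (fun hc => h (Nat.lt_of_succ_lt_succ hc)), dif_neg h]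

def walkF (m b : ℕ) : ℕ :=
  ∑ k ∈ Finset.range (m + 1),
    if m ≤ 2 * k + b ∧ 2 * k ≤ m + b + 1 then m.choose k else 0

lemma walkF_choose_split (m : ℕ) (P : ℕ → Prop) [DecidablePred P] :
    ∑ k ∈ Finset.range (m + 2), (if P k then (m+1).choose k else 0)
      = (∑ k ∈ Finset.range (m + 1), if P k then m.choose k else 0)
        + ∑ k ∈ Finset.range (m + 1), if P (k+1) then m.choose k else 0 := by
  have h1 : ∀ k, (if P k then (m+1).choose k else 0)
      = (if P k then m.choose k else 0) + (if 1 ≤ k ∧ P k then m.choose (k-1) else 0) := by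
    intro k
    cases k with
    | zero => simp
    | succ j =>
        by_cases h : P (j+1) <;>
          simp [h, Nat.choose_succ_succ', Nat.succ_sub_one, add_comm]
  rw [Finset.sum_congr rfl (fun k _ => h1 k), Finset.sum_add_distrib]
  congr 1
  · rw [Finset.sum_range_succ]
    simp [Nat.choose_succ_self]
  · rw [Finset.sum_range_succ']
    simp

lemma walkF_succ (m b : ℕ) :
    walkF (m+1) (b+1) = walkF m (b+2) + walkF m b := by
  unfold walkF
  rw [walkF_choose_split, ← Finset.sum_add_distrib, ← Finset.sum_add_distrib]
  refine Finset.sum_congr rfl fun k _ => ?_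
  split_ifs <;> omega

lemma walkF_succ_zero (m : ℕ) : walkF (m+1) 0 = walkF m 1 := by
  unfold walkF
  rw [walkF_choose_split, ← Finset.sum_add_distrib]
  refine Finset.sum_congr rfl fun k _ => ?_
  split_ifs <;> omega


@[simp] lemma val_true : val true = 1 := rfl
@[simp] lemma val_false : val false = -1 := rfl

lemma walkF_zero (b : ℕ) : walkF 0 b = 1 := by
  simp [walkF]

def goodSet (m b : ℕ) : Finset (Fin m → Bool) :=
  Finset.univ.filter (fun ε => ∀ k ≤ m, psum ε k ≤ (b : ℤ))

lemma cons_cond_iff {m b : ℕ} (x : Bool) (ε : Fin m → Bool) :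
    (∀ k ≤ m + 1, psum (Fin.cons x ε) k ≤ (b : ℤ)) ↔
      (val x ≤ (b : ℤ) ∧ ∀ k ≤ m, psum ε k ≤ (b : ℤ) - val x) := by
  constructor
  · intro h
    refine ⟨?_, fun k hk => ?_⟩
    · have h1 := h 1 (by omega)
      rwa [psum_cons_succ, psum_zero, add_zero] at h1
    · have h1 := h (k+1) (by omega)
      rw [psum_cons_succ] at h1
      linarith
  · rintro ⟨h1, h2⟩ k hk
    cases k with
    | zero => simpa using Int.natCast_nonneg b
    | succ j =>
        rw [psum_cons_succ]
        have := h2 j (by omega)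
        linarith

lemma sum_ite_count {α : Type*} [Fintype α] (p q : α → Prop)
    [DecidablePred p] [DecidablePred q] (h : ∀ a, p a ↔ q a) :
    (∑ a : α, if p a then (1:ℕ) else 0) = ∑ a : α, if q a then (1:ℕ) else 0 :=
  Finset.sum_congr rfl fun a _ => if_congr (h a) rfl rfl

lemma card_goodSet : ∀ m b : ℕ, (goodSet m b).card = walkF m b := by
  intro m
  induction m with
  | zero =>
      intro b
      rw [goodSet, Finset.filter_true_of_mem, walkF_zero]
      · simp
      · intro ε _ k hk
        interval_cases k
        simpa using Int.natCast_nonneg b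
  | succ m ih =>
      intro b
      have hinner : ∀ c : ℕ,
          (∑ ε : Fin m → Bool, if (∀ k ≤ m, psum ε k ≤ (c:ℤ)) then (1:ℕ) else 0)
            = walkF m c := by
        intro c
        rw [← ih c, goodSet, Finset.card_filter]
      have hcard : (goodSet (m+1) b).card
          = ∑ p : Bool × (Fin m → Bool),
              (if (∀ k ≤ m + 1, psum (Fin.cons p.1 p.2) k ≤ (b:ℤ)) then (1:ℕ) else 0) := by
        rw [goodSet, Finset.card_filter]
        rw [← Equiv.sum_comp (Fin.consEquiv (fun _ : Fin (m+1) => Bool))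
          (fun ε => if (∀ k ≤ m + 1, psum ε k ≤ (b:ℤ)) then (1:ℕ) else 0)]
        rfl
      rw [hcard, Fintype.sum_prod_type, Fintype.sum_bool]
      have hfalse : (∑ ε : Fin m → Bool,
          if (∀ k ≤ m + 1, psum (Fin.cons false ε) k ≤ (b:ℤ)) then (1:ℕ) else 0)
            = walkF m (b+1) := by
        rw [← hinner (b+1)]
        apply sum_ite_count
        intro ε
        rw [cons_cond_iff]
        simp only [val_false]
        constructor
        · rintro ⟨-, h⟩ k hk
          have := h k hk
          push_cast
          linarith
        · intro h
          refine ⟨by linarith [Int.natCast_nonneg b], fun k hk => ?_⟩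
          have := h k hk
          push_cast at this
          linarith
      rw [hfalse]
      cases b with
      | zero =>
          have htrue : (∑ ε : Fin m → Bool,
              if (∀ k ≤ m + 1, psum (Fin.cons true ε) k ≤ ((0:ℕ):ℤ)) then (1:ℕ) else 0)
                = 0 := by
            apply Finset.sum_eq_zero
            intro ε _
            rw [if_neg]
            rw [cons_cond_iff]
            rintro ⟨h1, -⟩
            simp at h1
          rw [htrue, walkF_succ_zero]
          simp
      | succ b' =>
          have htrue : (∑ ε : Fin m → Bool,
              if (∀ k ≤ m + 1, psum (Fin.cons true ε) k ≤ ((b'+1:ℕ):ℤ)) then (1:ℕ) else 0)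
                = walkF m b' := by
            rw [← hinner b']
            apply sum_ite_count
            intro ε
            rw [cons_cond_iff]
            simp only [val_true]
            constructor
            · rintro ⟨-, h⟩ k hk
              have := h k hk
              push_cast at this ⊢
              linarith
            · intro h
              refine ⟨by push_cast; linarith [Int.natCast_nonneg b'], fun k hk => ?_⟩
              have := h k hk
              push_cast at this ⊢
              linarith
          rw [htrue, walkF_succ]
          rw [add_comm]


lemma psum_succ_le {m : ℕ} (ε : Fin m → Bool) (k : ℕ) :
    psum ε (k + 1) ≤ psum ε k + 1 := by
  unfold psum
  rw [Finset.sum_range_succ]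
  have : (if h : k < m then val (ε ⟨k, h⟩) else 0) ≤ 1 := by
    split_ifs with h
    · cases ε ⟨k, h⟩ <;> simp
    · norm_num
  linarith

lemma psum_ne_two_iff {m : ℕ} (ε : Fin m → Bool) :
    (∀ k ≤ m, psum ε k ≠ 2) ↔ (∀ k ≤ m, psum ε k ≤ 1) := by
  constructor
  · intro h k
    induction k with
    | zero => intro _; simp
    | succ j ihj =>
        intro hk
        have h1 := ihj (by omega)
        have h2 := psum_succ_le ε j
        have h3 := h (j+1) hk
        omega
  · intro h k hk
    have := h k hk
    omega

lemma walkF_two_mul (n : ℕ) : walkF (2*n) 1 = (2*n+1).choose n := by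
  unfold walkF
  have hterm : ∀ k ∈ Finset.range (2*n + 1),
      (if 2*n ≤ 2*k + 1 ∧ 2*k ≤ 2*n + 1 + 1 then (2*n).choose k else 0)
        = (if k = n then (2*n).choose n else 0)
          + (if k = n + 1 then (2*n).choose (n+1) else 0) := by
    intro k _
    rcases eq_or_ne k n with rfl | hn
    · rw [if_pos (by omega), if_pos rfl, if_neg (by omega)]
      simp
    · rcases eq_or_ne k (n+1) with rfl | hn1
      · rw [if_pos (by omega), if_neg hn, if_pos rfl]
        simp
      · rw [if_neg (by omega), if_neg hn, if_neg hn1]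
  rw [Finset.sum_congr rfl hterm, Finset.sum_add_distrib,
    Finset.sum_ite_eq' (Finset.range (2*n+1)) n (fun _ => (2*n).choose n),
    Finset.sum_ite_eq' (Finset.range (2*n+1)) (n+1) (fun _ => (2*n).choose (n+1))]
  rw [if_pos (by simp; omega)]
  have h2 : (if n + 1 ∈ Finset.range (2*n+1) then (2*n).choose (n+1) else 0)
      = (2*n).choose (n+1) := by
    rcases Nat.eq_zero_or_pos n with rfl | hpos
    · simp
    · rw [if_pos (by simp; omega)]
  rw [h2, ← Nat.choose_succ_succ]
  have h3 : (2*n).succ.choose n.succ = (2*n+1).choose (n+1) := rfl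
  rw [h3, show n + 1 = 2*n + 1 - n by omega, Nat.choose_symm (by omega)]

lemma card_avoid (n : ℕ) :
    (Finset.univ.filter
      (fun ε : Fin (2*n) → Bool => ∀ k ≤ 2*n, psum ε k ≠ 2)).card
      = (2*n+1).choose n := by
  have h : ∀ ε : Fin (2*n) → Bool,
      (∀ k ≤ 2*n, psum ε k ≠ 2) ↔ (∀ k ≤ 2*n, psum ε k ≤ ((1:ℕ):ℤ)) := by
    intro ε
    rw [psum_ne_two_iff]
    norm_num
  rw [Finset.filter_congr (fun ε _ => h ε)]
  rw [show (Finset.filter (fun ε : Fin (2*n) → Bool => ∀ k ≤ 2*n, psum ε k ≤ ((1:ℕ):ℤ)) Finset.univ) = goodSet (2*n) 1 from rfl]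
  rw [card_goodSet, walkF_two_mul]


def cval {m : ℕ} (ε : Fin m → Bool) (i : ℕ) : ℤ :=
  if h : i < m then val (ε ⟨i, h⟩) else 0

lemma cval_of_lt {m i : ℕ} (ε : Fin m → Bool) (h : i < m) :
    cval ε i = val (ε ⟨i, h⟩) := dif_pos h

lemma psum_eq {m : ℕ} (ε : Fin m → Bool) (k : ℕ) :
    psum ε k = ∑ i ∈ Finset.range k, cval ε i := rfl

lemma val_injective : Function.Injective val := by
  intro a b h
  cases a <;> cases b <;> simp_all [val]

lemma val_decide (z : ℤ) (h : z = 1 ∨ z = -1) : val (decide (z = 1)) = z := by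
  rcases h with rfl | rfl
  · simp [val]
  · norm_num [val]

end RWAux

open MeasureTheory ProbabilityTheory RWAux

/-- Theorem 5.2, (5.2)–(5.3): for the simple symmetric random walk
`S` on `ℤ` started at `0`, with `T` the first hitting time of `2` (valued in `ℕ∞`,
equal to `⊤` if `2` is never reached), one has `P(T > 2n) = 4^{-n} * C(2n+1, n)`. -/
theorem hitting_time_two_tail {Ω : Type*} [MeasurableSpace Ω] (P : Measure Ω)
    [IsProbabilityMeasure P]
    (ξ : ℕ → Ω → ℤ) (hmeas : ∀ k, Measurable (ξ k))
    (hindep : iIndepFun ξ P)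
    (hone : ∀ k, P {ω | ξ k ω = 1} = 1 / 2)
    (hmone : ∀ k, P {ω | ξ k ω = -1} = 1 / 2)
    (S : ℕ → Ω → ℤ) (hS : ∀ k ω, S k ω = ∑ i ∈ Finset.range k, ξ i ω)
    (T : Ω → ℕ∞) (hT : ∀ ω, T ω = ⨅ (k : ℕ) (_ : S k ω = 2), (k : ℕ∞))
    (n : ℕ) :
    P {ω | ((2 * n : ℕ) : ℕ∞) < T ω} = (Nat.choose (2 * n + 1) n : ENNReal) / 4 ^ n := by
  classical
  -- Step A : rewrite the event in terms of the path up to time 2n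
  have hset : {ω | ((2 * n : ℕ) : ℕ∞) < T ω} = {ω | ∀ k ≤ 2 * n, S k ω ≠ 2} := by
    ext ω
    simp only [Set.mem_setOf_eq, hT ω]
    constructor
    · intro h k hk hSk
      have hle : (⨅ (k : ℕ) (_ : S k ω = 2), (k : ℕ∞)) ≤ (k : ℕ∞) := iInf₂_le k hSk
      have h2 : ((2 * n : ℕ) : ℕ∞) < (k : ℕ∞) := lt_of_lt_of_le h hle
      have : (2 * n : ℕ) < k := by exact_mod_cast h2
      omega
    · intro h
      have hle : (((2 * n + 1 : ℕ)) : ℕ∞) ≤ ⨅ (k : ℕ) (_ : S k ω = 2), (k : ℕ∞) := by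
        refine le_iInf fun k => le_iInf fun hSk => ?_
        have hk : 2 * n + 1 ≤ k := by
          by_contra hc
          exact h k (by omega) hSk
        exact_mod_cast hk
      refine lt_of_lt_of_le ?_ hle
      exact_mod_cast Nat.lt_succ_self (2 * n)
  rw [hset]
  -- the complement of the good set `G` is null
  have hGnull : P ({ω | ∀ i < 2 * n, ξ i ω = 1 ∨ ξ i ω = -1} : Set Ω)ᶜ = 0 := by
    have hGc : ({ω | ∀ i < 2 * n, ξ i ω = 1 ∨ ξ i ω = -1} : Set Ω)ᶜ
        = ⋃ i ∈ Set.Iio (2 * n), ({ω | ξ i ω = 1 ∨ ξ i ω = -1} : Set Ω)ᶜ := by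
      ext ω
      simp only [Set.mem_compl_iff, Set.mem_setOf_eq, Set.mem_iUnion, Set.mem_Iio,
        exists_prop]
      push_neg
      rfl
    rw [hGc, measure_biUnion_null_iff (Set.to_countable _)]
    intro i _
    have hmeas1 : MeasurableSet {ω | ξ i ω = 1 ∨ ξ i ω = -1} := by
      have h' : {ω | ξ i ω = 1 ∨ ξ i ω = -1} = ξ i ⁻¹' {1, -1} := by
        ext ω; simp
      rw [h']
      exact (hmeas i) (by measurability)
    rw [prob_compl_eq_zero_iff hmeas1]
    have hunion : {ω | ξ i ω = 1 ∨ ξ i ω = -1}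
        = {ω | ξ i ω = 1} ∪ {ω | ξ i ω = -1} := rfl
    have hdisj : Disjoint {ω | ξ i ω = 1} {ω | ξ i ω = -1} := by
      rw [Set.disjoint_left]
      intro ω h1 h2
      simp only [Set.mem_setOf_eq] at h1 h2
      omega
    have hm2 : MeasurableSet {ω | ξ i ω = -1} :=
      (hmeas i) (measurableSet_singleton (-1 : ℤ))
    rw [hunion, measure_union hdisj hm2, hone i, hmone i, ENNReal.add_halves]
  -- key pathwise identity
  have hkey : ∀ (ω : Ω) (ε : Fin (2 * n) → Bool),
      (∀ i ∈ Finset.range (2 * n), ξ i ω = cval ε i) →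
        ∀ k ≤ 2 * n, S k ω = psum ε k := by
    intro ω ε hω k hk
    rw [hS, psum_eq]
    refine Finset.sum_congr rfl fun i hi => ?_
    have hi' : i < 2 * n := by
      have := Finset.mem_range.mp hi; omega
    exact hω i (Finset.mem_range.mpr hi')
  -- identification of the event with a finite union of cylinders
  have hEG : {ω | ∀ k ≤ 2 * n, S k ω ≠ 2}
        ∩ {ω | ∀ i < 2 * n, ξ i ω = 1 ∨ ξ i ω = -1}
      = ⋃ ε ∈ Finset.univ.filter
          (fun ε : Fin (2 * n) → Bool => ∀ k ≤ 2 * n, psum ε k ≠ 2),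
          ⋂ i ∈ Finset.range (2 * n), ξ i ⁻¹' {cval ε i} := by
    ext ω
    constructor
    · rintro ⟨hE, hGω⟩
      have hmatch : ∀ i ∈ Finset.range (2 * n),
          ξ i ω = cval (fun j : Fin (2 * n) => decide (ξ (j : ℕ) ω = 1)) i := by
        intro i hi
        have hi' : i < 2 * n := Finset.mem_range.mp hi
        rw [cval_of_lt _ hi']
        exact (val_decide _ (hGω i hi')).symm
      have hωA : ω ∈ ⋂ i ∈ Finset.range (2 * n),
          ξ i ⁻¹' {cval (fun j : Fin (2 * n) => decide (ξ (j : ℕ) ω = 1)) i} := by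
        simp only [Set.mem_iInter, Set.mem_preimage, Set.mem_singleton_iff]
        exact hmatch
      have hεD : (fun j : Fin (2 * n) => decide (ξ (j : ℕ) ω = 1))
          ∈ Finset.univ.filter
            (fun ε : Fin (2 * n) → Bool => ∀ k ≤ 2 * n, psum ε k ≠ 2) := by
        rw [Finset.mem_filter]
        refine ⟨Finset.mem_univ _, fun k hk => ?_⟩
        rw [← hkey ω _ hmatch k hk]
        exact hE k hk
      exact Set.mem_biUnion hεD hωA
    · intro hω
      rw [Set.mem_iUnion₂] at hω
      obtain ⟨ε, hεD, hωA⟩ := hω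
      simp only [Set.mem_iInter, Set.mem_preimage, Set.mem_singleton_iff] at hωA
      refine ⟨fun k hk => ?_, fun i hi => ?_⟩
      · rw [hkey ω ε hωA k hk]
        rw [Finset.mem_filter] at hεD
        exact hεD.2 k hk
      · rw [hωA i (Finset.mem_range.mpr hi), cval_of_lt ε hi]
        cases ε ⟨i, hi⟩
        · right; rfl
        · left; rfl
  -- measure of each cylinder
  have hPA : ∀ ε : Fin (2 * n) → Bool,
      P (⋂ i ∈ Finset.range (2 * n), ξ i ⁻¹' {cval ε i})
        = (1 / 2 : ENNReal) ^ (2 * n) := by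
    intro ε
    rw [hindep.meas_biInter (S := Finset.range (2 * n))
      (s := fun i => ξ i ⁻¹' {cval ε i})
      (fun i _ => MeasurableSpace.measurableSet_comap.mpr
        ⟨{cval ε i}, measurableSet_singleton _, rfl⟩)]
    have hfac : ∀ i ∈ Finset.range (2 * n), P (ξ i ⁻¹' {cval ε i}) = 1 / 2 := by
      intro i hi
      have hi' : i < 2 * n := Finset.mem_range.mp hi
      rw [cval_of_lt ε hi']
      cases ε ⟨i, hi'⟩
      · rw [val_false]; exact hmone i
      · rw [val_true]; exact hone i
    rw [Finset.prod_congr rfl hfac, Finset.prod_const, Finset.card_range]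
  -- cylinders are measurable
  have hAmeas : ∀ ε : Fin (2 * n) → Bool,
      MeasurableSet (⋂ i ∈ Finset.range (2 * n), ξ i ⁻¹' {cval ε i}) := by
    intro ε
    exact MeasurableSet.biInter (Finset.countable_toSet _)
      (fun i _ => (hmeas i) (measurableSet_singleton _))
  -- cylinders are pairwise disjoint
  have hdisjA : (↑(Finset.univ.filter
        (fun ε : Fin (2 * n) → Bool => ∀ k ≤ 2 * n, psum ε k ≠ 2))
          : Set (Fin (2 * n) → Bool)).PairwiseDisjoint
      (fun ε => ⋂ i ∈ Finset.range (2 * n), ξ i ⁻¹' {cval ε i}) := by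
    intro ε _ ε' _ hne
    rw [Function.onFun, Set.disjoint_left]
    intro ω hω hω'
    simp only [Set.mem_iInter, Set.mem_preimage, Set.mem_singleton_iff] at hω hω'
    apply hne
    funext i
    have h1 := hω (i : ℕ) (Finset.mem_range.mpr i.isLt)
    have h2 := hω' (i : ℕ) (Finset.mem_range.mpr i.isLt)
    rw [h1] at h2
    rw [cval_of_lt ε i.isLt, cval_of_lt ε' i.isLt] at h2
    exact val_injective h2
  -- put everything together
  calc P {ω | ∀ k ≤ 2 * n, S k ω ≠ 2}
      = P ({ω | ∀ k ≤ 2 * n, S k ω ≠ 2}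
          ∩ {ω | ∀ i < 2 * n, ξ i ω = 1 ∨ ξ i ω = -1}) :=
        (measure_inter_conull hGnull).symm
    _ = P (⋃ ε ∈ Finset.univ.filter
          (fun ε : Fin (2 * n) → Bool => ∀ k ≤ 2 * n, psum ε k ≠ 2),
          ⋂ i ∈ Finset.range (2 * n), ξ i ⁻¹' {cval ε i}) := by rw [hEG]
    _ = ∑ ε ∈ Finset.univ.filter
          (fun ε : Fin (2 * n) → Bool => ∀ k ≤ 2 * n, psum ε k ≠ 2),
          P (⋂ i ∈ Finset.range (2 * n), ξ i ⁻¹' {cval ε i}) :=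
        measure_biUnion_finset hdisjA (fun ε _ => hAmeas ε)
    _ = ∑ _ε ∈ Finset.univ.filter
          (fun ε : Fin (2 * n) → Bool => ∀ k ≤ 2 * n, psum ε k ≠ 2),
          ((1 : ENNReal) / 2) ^ (2 * n) :=
        Finset.sum_congr rfl fun ε _ => hPA ε
    _ = ((Finset.univ.filter
          (fun ε : Fin (2 * n) → Bool => ∀ k ≤ 2 * n, psum ε k ≠ 2)).card : ENNReal)
          * ((1 : ENNReal) / 2) ^ (2 * n) := by
        rw [Finset.sum_const, nsmul_eq_mul]
    _ = (Nat.choose (2 * n + 1) n : ENNReal) / 4 ^ n := by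
        rw [card_avoid n]
        have h4 : ((1 : ENNReal) / 2) ^ (2 * n) = 1 / 4 ^ n := by
          rw [one_div, ← ENNReal.inv_pow, pow_mul]
          norm_num
        rw [h4, ENNReal.div_eq_inv_mul, ENNReal.div_eq_inv_mul]
        ring
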